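/- (Eulerian matrix identity) For any n-tuple A = (A_1,…,A_n) of hermitian n×n complex matrices, Σ_{i=1}^n A_i Q_i = D(A_1,…,A_n)·I; equivalently, Σ_{i=1}^n ⟨Q_i ω, A_i ω⟩ = D(A_1,…,A_n)·⟨ω,ω⟩ for every ω ∈ C^n. -/

import Mathlib

open Matrix BigOperators Finset ComplexOrder Nat

/-- The mixed discriminant of an `n`-tuple of complex `n × n` matrices:
`D(A₁,…,Aₙ) = Σ_{σ,τ ∈ Sₙ} sgn(στ) Π_i A_i (σ i) (τ i)`. -/
noncomputable def mixedDisc {n : ℕ} (A : Fin n → Matrix (Fin n) (Fin n) ℂ) : ℂ :=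
  ∑ σ : Equiv.Perm (Fin n), ∑ τ : Equiv.Perm (Fin n),
    ((Equiv.Perm.sign (σ * τ) : ℤ) : ℂ) * ∏ i : Fin n, A i (σ i) (τ i)

/-- The standard inner product on `ℂⁿ`: `⟨u, v⟩ = Σᵢ conj(uᵢ) vᵢ`. -/
noncomputable def cInner {n : ℕ} (u v : Fin n → ℂ) : ℂ := star u ⬝ᵥ v

lemma trace_std_aux {n : ℕ} (Q : Matrix (Fin n) (Fin n) ℂ) (b c : Fin n) :
    ((Matrix.single c b (1:ℂ)) * Q).trace = Q b c := by
  simp [Matrix.trace, Matrix.mul_apply, Matrix.single, Matrix.diag, ite_and]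

lemma sum_entry_aux {n : ℕ} (A Q : Fin n → Matrix (Fin n) (Fin n) ℂ)
    (hQ : ∀ (i : Fin n) (X : Matrix (Fin n) (Fin n) ℂ),
      mixedDisc (Function.update A i X) = (X * Q i).trace)
    (a c : Fin n) :
    (∑ i, A i * Q i) a c
      = ∑ σ : Equiv.Perm (Fin n), ∑ τ : Equiv.Perm (Fin n),
        ((Equiv.Perm.sign (σ * τ) : ℤ) : ℂ) *
          ∏ j, A j (if σ j = c then a else σ j) (τ j) := by
  have hQe : ∀ (i : Fin n) (b c' : Fin n),
      Q i b c' = mixedDisc (Function.update A i (Matrix.single c' b 1)) := by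
    intro i b c'; rw [hQ i, trace_std_aux]
  have hprod : ∀ (i : Fin n) (X : Matrix (Fin n) (Fin n) ℂ) (σ τ : Equiv.Perm (Fin n)),
      (∏ j, (Function.update A i X j) (σ j) (τ j))
        = X (σ i) (τ i) * ∏ j ∈ univ.erase i, A j (σ j) (τ j) := by
    intro i X σ τ
    rw [← Finset.mul_prod_erase univ _ (mem_univ i), Function.update_self]
    congr 1
    exact Finset.prod_congr rfl fun j hj => by
      rw [Function.update_of_ne (Finset.mem_erase.1 hj).1]
  calc (∑ i, A i * Q i) a c
      = ∑ i, ∑ b, A i a b * Q i b c := by simp [Matrix.sum_apply, Matrix.mul_apply]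
    _ = ∑ i, ∑ σ : Equiv.Perm (Fin n), ∑ τ : Equiv.Perm (Fin n),
          (if σ i = c then
            ((Equiv.Perm.sign (σ * τ) : ℤ) : ℂ) * (A i a (τ i) *
              ∏ j ∈ univ.erase i, A j (σ j) (τ j)) else 0) := by
        refine Finset.sum_congr rfl fun i _ => ?_
        simp only [hQe, mixedDisc, hprod, Finset.mul_sum]
        rw [Finset.sum_comm]
        refine Finset.sum_congr rfl fun σ _ => ?_
        rw [Finset.sum_comm]
        refine Finset.sum_congr rfl fun τ _ => ?_
        simp only [Matrix.single, Matrix.of_apply, ite_and, mul_ite, ite_mul,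
          mul_one, mul_zero, zero_mul, one_mul]
        by_cases hσ : c = σ i
        · simp only [hσ, if_pos rfl, eq_comm (a := σ i), if_pos rfl, if_true]
          rw [Finset.sum_ite_eq' univ (τ i)]
          simp only [mem_univ, if_true, if_pos]
          ring
        · have h' : σ i ≠ c := fun h => hσ h.symm
          simp [hσ, h']
    _ = ∑ σ : Equiv.Perm (Fin n), ∑ τ : Equiv.Perm (Fin n),
        ((Equiv.Perm.sign (σ * τ) : ℤ) : ℂ) *
          ∏ j, A j (if σ j = c then a else σ j) (τ j) := by
        rw [Finset.sum_comm]
        refine Finset.sum_congr rfl fun σ _ => ?_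
        rw [Finset.sum_comm]
        refine Finset.sum_congr rfl fun τ _ => ?_
        have : ∀ i : Fin n, σ i = c ↔ i = σ.symm c := fun i => by
          rw [← Equiv.eq_symm_apply]
        simp only [this]
        rw [Finset.sum_ite_eq' univ (σ.symm c)]
        simp only [mem_univ, if_pos, if_true]
        congr 1
        rw [← Finset.mul_prod_erase univ
          (fun j => A j (if j = Equiv.symm σ c then a else σ j) (τ j)) (mem_univ (σ.symm c))]
        rw [if_pos rfl]
        congr 1
        refine Finset.prod_congr rfl fun j hj => ?_
        rw [if_neg (Finset.mem_erase.1 hj).1]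

lemma first_part_aux {n : ℕ} (A Q : Fin n → Matrix (Fin n) (Fin n) ℂ)
    (hQ : ∀ (i : Fin n) (X : Matrix (Fin n) (Fin n) ℂ),
      mixedDisc (Function.update A i X) = (X * Q i).trace) :
    (∑ i, A i * Q i) = mixedDisc A • (1 : Matrix (Fin n) (Fin n) ℂ) := by
  ext a c
  rw [sum_entry_aux A Q hQ a c]
  by_cases hac : a = c
  · subst hac
    have h1 : ∀ (σ : Equiv.Perm (Fin n)) (j : Fin n),
        (if σ j = a then a else σ j) = σ j := by
      intro σ j; split_ifs with h; exacts [h.symm, rfl]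
    simp only [h1]
    rw [Matrix.smul_apply, Matrix.one_apply_eq, smul_eq_mul, mul_one]
    rfl
  · rw [Matrix.smul_apply, Matrix.one_apply_ne hac, smul_eq_mul, mul_zero]
    set F : Equiv.Perm (Fin n) → ℂ := fun σ =>
      ∑ τ : Equiv.Perm (Fin n),
        ((Equiv.Perm.sign (σ * τ) : ℤ) : ℂ) *
          ∏ j, A j (if σ j = c then a else σ j) (τ j) with hF
    show ∑ σ, F σ = 0
    have hswap : ∀ σ : Equiv.Perm (Fin n), F (Equiv.swap a c * σ) = - F σ := by
      intro σ
      rw [hF]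
      simp only
      rw [← Finset.sum_neg_distrib]
      refine Finset.sum_congr rfl fun τ _ => ?_
      have hsign : ((Equiv.Perm.sign (Equiv.swap a c * σ * τ) : ℤ) : ℂ)
          = -((Equiv.Perm.sign (σ * τ) : ℤ) : ℂ) := by
        rw [mul_assoc, Equiv.Perm.sign_mul, Equiv.Perm.sign_swap hac]
        push_cast
        ring
      rw [hsign]
      have hprod : ∀ j, (if (Equiv.swap a c * σ) j = c then a else (Equiv.swap a c * σ) j)
          = (if σ j = c then a else σ j) := by
        intro j
        simp only [Equiv.Perm.mul_apply]
        rcases eq_or_ne (σ j) a with h | h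
        · simp only [h, Equiv.swap_apply_left]
          simp [hac]
        · rcases eq_or_ne (σ j) c with h2 | h2
          · simp only [h2, Equiv.swap_apply_right]
            simp [hac]
          · simp only [Equiv.swap_apply_of_ne_of_ne h h2]
      simp only [hprod]
      ring
    have hsum : ∑ σ : Equiv.Perm (Fin n), F σ
        = ∑ σ : Equiv.Perm (Fin n), F (Equiv.swap a c * σ) :=
      (Equiv.sum_comp (Equiv.mulLeft (Equiv.swap a c)) F).symm
    have h2 : ∑ σ : Equiv.Perm (Fin n), F σ = - ∑ σ : Equiv.Perm (Fin n), F σ := by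
      conv_lhs => rw [hsum]
      rw [← Finset.sum_neg_distrib]
      exact Finset.sum_congr rfl fun σ _ => hswap σ
    have h3 : (∑ σ : Equiv.Perm (Fin n), F σ) + ∑ σ : Equiv.Perm (Fin n), F σ = 0 := by
      nth_rewrite 2 [h2]
      ring
    exact add_self_eq_zero.mp h3

lemma mixedDisc_conj_aux {n : ℕ} (A : Fin n → Matrix (Fin n) (Fin n) ℂ)
    (hA : ∀ i, (A i).IsHermitian) :
    (starRingEnd ℂ) (mixedDisc A) = mixedDisc A := by
  have h1 : (starRingEnd ℂ) (mixedDisc A)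
      = ∑ σ : Equiv.Perm (Fin n), ∑ τ : Equiv.Perm (Fin n),
        ((Equiv.Perm.sign (σ * τ) : ℤ) : ℂ) * ∏ i, A i (τ i) (σ i) := by
    unfold mixedDisc
    rw [map_sum]
    refine Finset.sum_congr rfl fun σ _ => ?_
    rw [map_sum]
    refine Finset.sum_congr rfl fun τ _ => ?_
    rw [_root_.map_mul, map_prod, map_intCast]
    congr 1
    exact Finset.prod_congr rfl fun j _ => (hA j).apply _ _
  rw [h1]
  unfold mixedDisc
  rw [Finset.sum_comm]
  refine Finset.sum_congr rfl fun x _ => Finset.sum_congr rfl fun y _ => ?_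
  congr 2
  rw [Equiv.Perm.sign_mul, Equiv.Perm.sign_mul, mul_comm]

/-- Eulerian matrix identity: for an `n`-tuple `A` of hermitian matrices, with `Q i` the
matrix satisfying `D(A₁,…,A_{i-1},X,A_{i+1},…,Aₙ) = tr(X·Q i)` for all `X`, one has
`Σᵢ Aᵢ Qᵢ = D(A)·I`; equivalently `Σᵢ ⟨Qᵢ ω, Aᵢ ω⟩ = D(A)·⟨ω,ω⟩` for all `ω ∈ ℂⁿ`. -/
theorem eulerian_matrix_identity {n : ℕ}
    (A Q : Fin n → Matrix (Fin n) (Fin n) ℂ)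
    (hA : ∀ i, (A i).IsHermitian)
    (hQ : ∀ (i : Fin n) (X : Matrix (Fin n) (Fin n) ℂ),
      mixedDisc (Function.update A i X) = (X * Q i).trace) :
    (∑ i, A i * Q i) = mixedDisc A • (1 : Matrix (Fin n) (Fin n) ℂ) ∧
    (∀ ω : Fin n → ℂ,
      ∑ i, cInner ((Q i).mulVec ω) ((A i).mulVec ω) = mixedDisc A * cInner ω ω) := by
  have hfirst := first_part_aux A Q hQ
  refine ⟨hfirst, fun ω => ?_⟩
  have hconj := mixedDisc_conj_aux A hA
  have h1 : (∑ i, (Q i)ᴴ * A i) = mixedDisc A • (1 : Matrix (Fin n) (Fin n) ℂ) := by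
    calc ∑ i, (Q i)ᴴ * A i
        = ∑ i, ((A i) * (Q i))ᴴ := by
          refine Finset.sum_congr rfl fun i _ => ?_
          rw [Matrix.conjTranspose_mul, (hA i).eq]
      _ = (∑ i, A i * Q i)ᴴ := (Matrix.conjTranspose_sum _ _).symm
      _ = (mixedDisc A • (1 : Matrix (Fin n) (Fin n) ℂ))ᴴ := by rw [hfirst]
      _ = star (mixedDisc A) • (1 : Matrix (Fin n) (Fin n) ℂ) := by
          rw [Matrix.conjTranspose_smul, Matrix.conjTranspose_one]
      _ = mixedDisc A • (1 : Matrix (Fin n) (Fin n) ℂ) := by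
          rw [show star (mixedDisc A) = mixedDisc A from hconj]
  calc ∑ i, cInner ((Q i).mulVec ω) ((A i).mulVec ω)
      = ∑ i, star ω ⬝ᵥ ((Q i)ᴴ * A i).mulVec ω := by
        refine Finset.sum_congr rfl fun i _ => ?_
        rw [cInner, Matrix.star_mulVec, ← Matrix.dotProduct_mulVec,
          ← Matrix.mulVec_mulVec]
    _ = star ω ⬝ᵥ (∑ i, (Q i)ᴴ * A i).mulVec ω := by
        simp only [Matrix.mulVec, Matrix.sum_apply, dotProduct, Finset.sum_mul,
          Finset.mul_sum, Matrix.sum_apply]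
        rw [Finset.sum_comm]
        refine Finset.sum_congr rfl fun k _ => ?_
        rw [Finset.sum_comm]
    _ = mixedDisc A * cInner ω ω := by
        rw [h1, Matrix.smul_mulVec, Matrix.one_mulVec, dotProduct_smul]
        rfl
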